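/- Under the ACQUIRE hypotheses, if in addition F is strictly convex, then the whole sequence {x⁽ᵏ⁾} converges to the unique minimizer of F over S. -/

import Mathlib

open Filter Set Topology RealInnerProductSpace

section Aux

variable {E : Type*} [NormedAddCommGroup E] [InnerProductSpace ℝ E] [CompleteSpace E]

lemma line_hasDerivAt (f : E → ℝ) (hf : Differentiable ℝ f) (x d : E) (t : ℝ) :
    HasDerivAt (fun s : ℝ => f (x + s • d)) ⟪gradient f (x + t • d), d⟫ t := by
  have h1 : HasDerivAt (fun s : ℝ => x + s • d) d t := by
    simpa using ((hasDerivAt_id t).smul_const d).const_add x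
  have h2 := ((hf (x + t • d)).hasGradientAt).hasFDerivAt
  have h3 := h2.comp_hasDerivAt t h1
  simp only [InnerProductSpace.toDual_apply_apply] at h3; exact h3

lemma convex_grad_ineq (f : E → ℝ) (hconv : ConvexOn ℝ Set.univ f)
    (hf : Differentiable ℝ f) (x y : E) :
    f x + ⟪gradient f x, y - x⟫ ≤ f y := by
  set g : ℝ → ℝ := fun t => f (x + t • (y - x)) with hg
  have hgconv : ConvexOn ℝ Set.univ g := by
    have h := hconv.comp_affineMap (AffineMap.lineMap x y : ℝ →ᵃ[ℝ] E)
    have he : (f ∘ (AffineMap.lineMap x y : ℝ →ᵃ[ℝ] E)) = g := by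
      funext t
      simp [hg, Function.comp, AffineMap.lineMap_apply_module', add_comm]
    rwa [Set.preimage_univ, he] at h
  have hd : HasDerivAt g ⟪gradient f x, y - x⟫ 0 := by
    simpa using line_hasDerivAt f hf x (y - x) 0
  have h := hgconv.le_slope_of_hasDerivAt (Set.mem_univ 0) (Set.mem_univ 1) zero_lt_one hd
  have hs : slope g 0 1 = g 1 - g 0 := by simp [slope_def_field]
  have hg1 : g 1 = f y := by simp [hg]
  have hg0 : g 0 = f x := by simp [hg]
  rw [hs, hg1, hg0] at h
  linarith

lemma hasGradientAt_half_normSq (γ : ℝ) (x : E) :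
    HasGradientAt (fun z : E => γ / 2 * ‖z‖ ^ 2) (γ • x) x := by
  rw [hasGradientAt_iff_hasFDerivAt]
  have h := ((hasFDerivAt_id x).inner ℝ (hasFDerivAt_id x)).const_mul (γ / 2)
  have heq : (fun z : E => γ / 2 * ‖z‖ ^ 2) = fun z : E => γ / 2 * ⟪z, z⟫ := by
    funext z; rw [real_inner_self_eq_norm_sq]
  rw [heq]
  refine h.congr_fderiv ?_
  ext v
  simp [fderivInnerCLM_apply, InnerProductSpace.toDual_apply_apply, real_inner_smul_left,
    real_inner_comm x v]
  ring

lemma strong_grad_ineq (f : E → ℝ) (γ : ℝ)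
    (hconv : ConvexOn ℝ Set.univ (fun z => f z - γ / 2 * ‖z‖ ^ 2))
    (hf : Differentiable ℝ f) (x y : E) :
    f x + ⟪gradient f x, y - x⟫ + γ / 2 * ‖y - x‖ ^ 2 ≤ f y := by
  set g : E → ℝ := fun z => f z - γ / 2 * ‖z‖ ^ 2 with hgdef
  have hq : ∀ z : E, HasGradientAt (fun w : E => γ / 2 * ‖w‖ ^ 2) (γ • z) z :=
    fun z => hasGradientAt_half_normSq γ z
  have hgdiff : Differentiable ℝ g :=
    hf.sub (fun z => ((hq z).differentiableAt))
  have hggrad : HasGradientAt g (gradient f x - γ • x) x := by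
    rw [hasGradientAt_iff_hasFDerivAt, map_sub]
    exact ((hf x).hasGradientAt.hasFDerivAt).sub (hq x).hasFDerivAt
  have h := convex_grad_ineq (E := E) g hconv hgdiff x y
  rw [hggrad.gradient] at h
  have hinner : ⟪gradient f x - γ • x, y - x⟫
      = ⟪gradient f x, y - x⟫ - γ * (⟪x, y⟫ - ‖x‖ ^ 2) := by
    simp [inner_sub_left, inner_sub_right, real_inner_smul_left, real_inner_self_eq_norm_sq]
    ring
  have hnorm : ‖y - x‖ ^ 2 = ‖y‖ ^ 2 - 2 * ⟪x, y⟫ + ‖x‖ ^ 2 := by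
    rw [← real_inner_self_eq_norm_sq, ← real_inner_self_eq_norm_sq, ← real_inner_self_eq_norm_sq]
    rw [inner_sub_left, inner_sub_right, inner_sub_right, real_inner_comm y x]
    ring
  rw [hinner] at h
  simp only [hgdef] at h
  rw [hnorm]
  linarith

lemma varineq (f : E → ℝ) (hf : Differentiable ℝ f) (S : Set E) (hSconv : Convex ℝ S)
    (xm : E) (hmin : ∀ z ∈ S, f xm ≤ f z) (hxm : xm ∈ S)
    (z : E) (hz : z ∈ S) : 0 ≤ ⟪gradient f xm, z - xm⟫ := by
  set g : ℝ → ℝ := fun t => f (xm + t • (z - xm)) with hgdef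
  have hd : HasDerivAt g ⟪gradient f xm, z - xm⟫ 0 := by
    have h1 : HasDerivAt (fun s : ℝ => xm + s • (z - xm)) (z - xm) 0 := by
      simpa using ((hasDerivAt_id (0:ℝ)).smul_const (z - xm)).const_add xm
    have h2 := ((hf xm).hasGradientAt).hasFDerivAt
    have h2' : HasFDerivAt f (InnerProductSpace.toDual ℝ E (gradient f xm))
        ((fun s : ℝ => xm + s • (z - xm)) 0) := by simpa using h2
    have h3 := h2'.comp_hasDerivAt (0:ℝ) h1
    simp only [InnerProductSpace.toDual_apply_apply] at h3; exact h3
  have hslope : Filter.Tendsto (slope g 0) (𝓝[≠] 0) (𝓝 ⟪gradient f xm, z - xm⟫) :=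
    hasDerivAt_iff_tendsto_slope.mp hd
  have hmono : 𝓝[>] (0:ℝ) ≤ 𝓝[≠] (0:ℝ) :=
    nhdsWithin_mono 0 (fun t ht => ne_of_gt ht)
  have hslope' := hslope.mono_left hmono
  refine ge_of_tendsto hslope' ?_
  filter_upwards [Ioo_mem_nhdsGT_of_mem (by constructor <;> norm_num : (0:ℝ) ∈ Ico (0:ℝ) 1)]
    with t ht
  have hmem : xm + t • (z - xm) ∈ S := by
    have : (1 - t) • xm + t • z ∈ S :=
      hSconv hxm hz (by linarith [ht.2]) (le_of_lt ht.1) (by ring)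
    convert this using 1
    rw [smul_sub, sub_smul, one_smul]
    abel
  have hge : g 0 ≤ g t := by
    have : g 0 = f xm := by simp [hgdef]
    rw [this]
    exact hmin _ hmem
  rw [slope_def_field]
  have : (0:ℝ) < t - 0 := by simpa using ht.1
  exact div_nonneg (by simpa using sub_nonneg.mpr hge) (by linarith)

end Aux

theorem stmt_6 {n : ℕ}
    (S : Set (EuclideanSpace ℝ (Fin n)))
    (hSne : S.Nonempty) (hScl : IsClosed S) (hSconv : Convex ℝ S)
    (F : EuclideanSpace ℝ (Fin n) → ℝ)
    (hFconv : ConvexOn ℝ Set.univ F)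
    (hFdiff : Differentiable ℝ F)
    (L : ℝ) (hL : 0 < L)
    (hFLip : ∀ u v, ‖gradient F u - gradient F v‖ ≤ L * ‖u - v‖)
    (hFcoer : Filter.Tendsto F (Filter.comap norm Filter.atTop) Filter.atTop)
    (γ η alphaBar M : ℝ) (hγ : 0 < γ) (hη : η ∈ Set.Ioo (0 : ℝ) 1)
    (halphaBar : 0 < alphaBar) (hM : 0 < M)
    (Fk : ℕ → EuclideanSpace ℝ (Fin n) → ℝ)
    (x xb xh : ℕ → EuclideanSpace ℝ (Fin n))
    (ε α : ℕ → ℝ)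
    (hFkdiff : ∀ k, Differentiable ℝ (Fk k))
    (hFksc : ∀ k, ConvexOn ℝ Set.univ (fun z => Fk k z - γ / 2 * ‖z‖ ^ 2))
    (hFkLip : ∀ k u v, ‖gradient (Fk k) u - gradient (Fk k) v‖ ≤ M * ‖u - v‖)
    (hgradeq : ∀ k, gradient (Fk k) (x k) = gradient F (x k))
    (hxbS : ∀ k, xb k ∈ S)
    (hxbmin : ∀ k, ∀ z ∈ S, Fk k (xb k) ≤ Fk k z)
    (hxhS : ∀ k, xh k ∈ S)
    (hxherr : ∀ k, ‖xh k - xb k‖ ≤ ε k)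
    (hxhdec : ∀ k, Fk k (xh k) ≤ Fk k (x k))
    (hε : ∀ k, 0 < ε k)
    (hεlim : Filter.Tendsto ε Filter.atTop (nhds 0))
    (hα : ∀ k, α k ∈ Set.Icc alphaBar 1)
    (harmijo : ∀ k, F (x k + α k • (xh k - x k)) ≤
      F (x k) + η * α k * (inner ℝ (gradient F (x k)) (xh k - x k) : ℝ))
    (hupd : ∀ k, x (k + 1) = x k + α k • (xh k - x k))
    (hx0 : x 0 ∈ S)
    (hFstrict : StrictConvexOn ℝ Set.univ F) :
    ∃ xstar : EuclideanSpace ℝ (Fin n), xstar ∈ S ∧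
      (∀ z ∈ S, F xstar ≤ F z) ∧
      (∀ z ∈ S, (∀ w ∈ S, F z ≤ F w) → z = xstar) ∧
      Filter.Tendsto x Filter.atTop (nhds xstar) := by
  have hFc : Continuous F := hFdiff.continuous
  have hcoc : Tendsto F (cocompact (EuclideanSpace ℝ (Fin n))) atTop :=
    hFcoer.mono_left tendsto_norm_cocompact_atTop.le_comap
  -- existence of a minimizer of F on S
  obtain ⟨x₀, hx₀⟩ := hSne
  obtain ⟨xs, hxsS, hxsmin'⟩ := hFc.continuousOn.exists_isMinOn' hScl hx₀
    ((hcoc.eventually (eventually_ge_atTop (F x₀))).filter_mono inf_le_left)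
  have hxsmin : ∀ z ∈ S, F xs ≤ F z := fun z hz => hxsmin' hz
  -- uniqueness
  have huniq : ∀ z ∈ S, (∀ w ∈ S, F z ≤ F w) → z = xs := by
    intro z hz hmin
    by_contra hne
    have hFz : F z = F xs := le_antisymm (hmin xs hxsS) (hxsmin z hz)
    have hmid : (1/2 : ℝ) • z + (1/2 : ℝ) • xs ∈ S :=
      hSconv hz hxsS one_half_pos.le one_half_pos.le (add_halves 1)
    have hlt := hFstrict.2 (Set.mem_univ z) (Set.mem_univ xs) hne
      one_half_pos one_half_pos (add_halves 1)
    have hge := hxsmin _ hmid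
    rw [hFz] at hlt
    simp only [smul_eq_mul] at hlt
    linarith
  -- iterates stay in S
  have hxS : ∀ k, x k ∈ S := by
    intro k
    induction k with
    | zero => exact hx0
    | succ k ih =>
      rw [hupd k]
      have hαk := hα k
      have h1 : x k + α k • (xh k - x k) = (1 - α k) • x k + α k • xh k := by
        rw [smul_sub, sub_smul, one_smul]; abel
      rw [h1]
      exact hSconv ih (hxhS k) (by linarith [hαk.2]) (le_trans halphaBar.le hαk.1) (by ring)
  -- key inequality
  have hkey : ∀ k, ⟪gradient F (x k), xh k - x k⟫ ≤ -(γ/2) * ‖xh k - x k‖ ^ 2 := by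
    intro k
    have h := strong_grad_ineq (Fk k) γ (hFksc k) (hFkdiff k) (x k) (xh k)
    rw [hgradeq k] at h
    have h2 := hxhdec k
    linarith
  -- descent
  have hcpos : 0 < η * alphaBar * (γ/2) := by
    have h1 := hη.1
    have h2 : (0:ℝ) < γ/2 := by linarith
    exact mul_pos (mul_pos h1 halphaBar) h2
  have hdesc : ∀ k, F (x (k+1)) ≤ F (x k) - η * alphaBar * (γ/2) * ‖xh k - x k‖ ^ 2 := by
    intro k
    rw [hupd k]
    have h1 := harmijo k
    have h2 := hkey k
    have hαk := hα k
    have hd2 : (0:ℝ) ≤ ‖xh k - x k‖ ^ 2 := sq_nonneg _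
    have hαpos : 0 < α k := lt_of_lt_of_le halphaBar hαk.1
    have e1 : η * α k * ⟪gradient F (x k), xh k - x k⟫
        ≤ η * α k * (-(γ/2) * ‖xh k - x k‖ ^ 2) := by
      apply mul_le_mul_of_nonneg_left h2
      exact le_of_lt (mul_pos hη.1 hαpos)
    have e2 : alphaBar * ‖xh k - x k‖ ^ 2 ≤ α k * ‖xh k - x k‖ ^ 2 :=
      mul_le_mul_of_nonneg_right hαk.1 hd2
    nlinarith [hη.1, hγ]
  have hmono : ∀ k, F (x (k+1)) ≤ F (x k) := by
    intro k
    have := hdesc k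
    nlinarith [sq_nonneg ‖xh k - x k‖]
  have hanti : Antitone (fun k => F (x k)) := antitone_nat_of_succ_le hmono
  -- convergence of F (x k)
  have hbdd : BddBelow (Set.range fun k => F (x k)) :=
    ⟨F xs, by rintro v ⟨k, rfl⟩; exact hxsmin _ (hxS k)⟩
  have hFlim : Tendsto (fun k => F (x k)) atTop (𝓝 (⨅ k, F (x k))) :=
    tendsto_atTop_ciInf hanti hbdd
  have hFlim' : Tendsto (fun k => F (x (k+1))) atTop (𝓝 (⨅ k, F (x k))) :=
    hFlim.comp (tendsto_add_atTop_nat 1)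
  have hdiff0 : Tendsto (fun k => F (x k) - F (x (k+1))) atTop (𝓝 0) := by
    simpa using hFlim.sub hFlim'
  -- d k → 0
  have hds : Tendsto (fun k => ‖xh k - x k‖ ^ 2) atTop (𝓝 0) := by
    apply squeeze_zero (fun k => sq_nonneg _)
      (g := fun k => (F (x k) - F (x (k+1))) / (η * alphaBar * (γ/2)))
    · intro k
      rw [le_div_iff₀ hcpos]
      have := hdesc k
      linarith [hdesc k]
    · simpa using hdiff0.div_const (η * alphaBar * (γ/2))
  have hd0 : Tendsto (fun k => ‖xh k - x k‖) atTop (𝓝 0) := by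
    have := hds.sqrt
    simpa [Real.sqrt_sq (norm_nonneg _)] using this
  -- xb k - x k → 0
  have hxb0 : Tendsto (fun k => ‖xb k - x k‖) atTop (𝓝 0) := by
    apply squeeze_zero (fun k => norm_nonneg _) (g := fun k => ε k + ‖xh k - x k‖)
    · intro k
      calc ‖xb k - x k‖ ≤ ‖xb k - xh k‖ + ‖xh k - x k‖ := norm_sub_le_norm_sub_add_norm_sub _ _ _
        _ ≤ ε k + ‖xh k - x k‖ := by
            have := hxherr k
            rw [norm_sub_rev (xb k)]
            linarith
    · simpa using hεlim.add hd0
  -- gradient of F is continuous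
  have hgc : Continuous (gradient F) := by
    have hlip : LipschitzWith (Real.toNNReal L) (gradient F) := by
      apply LipschitzWith.of_dist_le_mul
      intro u v
      rw [dist_eq_norm, dist_eq_norm, Real.coe_toNNReal L hL.le]
      exact hFLip u v
    exact hlip.continuous
  -- cluster point property
  have hcluster : ∀ (φ : ℕ → ℕ) (x' : EuclideanSpace ℝ (Fin n)), Tendsto φ atTop atTop →
      Tendsto (fun j => x (φ j)) atTop (𝓝 x') → x' ∈ S ∧ ∀ z ∈ S, F x' ≤ F z := by
    intro φ x' hφ hφlim
    have hx'S : x' ∈ S := hScl.mem_of_tendsto hφlim (Eventually.of_forall fun j => hxS (φ j))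
    refine ⟨hx'S, ?_⟩
    have h0 : Tendsto (fun j => ‖xb (φ j) - x (φ j)‖) atTop (𝓝 0) := hxb0.comp hφ
    have hxblim : Tendsto (fun j => xb (φ j)) atTop (𝓝 x') := by
      have h1 : Tendsto (fun j => xb (φ j) - x (φ j)) atTop (𝓝 0) :=
        tendsto_zero_iff_norm_tendsto_zero.mpr h0
      have h2 := hφlim.add h1
      have heq : (fun j => x (φ j) + (xb (φ j) - x (φ j))) = fun j => xb (φ j) := by
        funext j; abel
      rw [heq] at h2
      simpa using h2
    intro z hz
    set a : ℕ → ℝ := fun j => ⟪gradient F (x (φ j)), z - xb (φ j)⟫ with ha_def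
    set b : ℕ → ℝ := fun j =>
      ⟪gradient (Fk (φ j)) (xb (φ j)) - gradient (Fk (φ j)) (x (φ j)), z - xb (φ j)⟫ with hb_def
    have hzxb : Tendsto (fun j => z - xb (φ j)) atTop (𝓝 (z - x')) :=
      tendsto_const_nhds.sub hxblim
    have ha : Tendsto a atTop (𝓝 ⟪gradient F x', z - x'⟫) :=
      ((hgc.tendsto x').comp hφlim).inner hzxb
    have hb : Tendsto b atTop (𝓝 0) := by
      refine squeeze_zero_norm (a := fun j => M * ‖xb (φ j) - x (φ j)‖ * ‖z - xb (φ j)‖)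
        (fun j => ?_) ?_
      · calc ‖b j‖ ≤ ‖gradient (Fk (φ j)) (xb (φ j)) - gradient (Fk (φ j)) (x (φ j))‖
              * ‖z - xb (φ j)‖ := norm_inner_le_norm _ _
          _ ≤ M * ‖xb (φ j) - x (φ j)‖ * ‖z - xb (φ j)‖ :=
              mul_le_mul_of_nonneg_right (hFkLip _ _ _) (norm_nonneg _)
      · have := ((tendsto_const_nhds (x := M)).mul h0).mul (hzxb.norm)
        simpa using this
    have hsum : ∀ j, 0 ≤ a j + b j := by
      intro j
      have hvi := varineq (Fk (φ j)) (hFkdiff (φ j)) S hSconv (xb (φ j))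
        (hxbmin (φ j)) (hxbS (φ j)) z hz
      have hsplit : gradient (Fk (φ j)) (xb (φ j)) = gradient F (x (φ j))
          + (gradient (Fk (φ j)) (xb (φ j)) - gradient (Fk (φ j)) (x (φ j))) := by
        rw [hgradeq (φ j)]; abel
      rw [hsplit, inner_add_left] at hvi
      exact hvi
    have hlim : Tendsto (fun j => a j + b j) atTop (𝓝 ⟪gradient F x', z - x'⟫) := by
      simpa using ha.add hb
    have h0le : (0:ℝ) ≤ ⟪gradient F x', z - x'⟫ := ge_of_tendsto' hlim hsum
    have := convex_grad_ineq F hFconv hFdiff x' z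
    linarith
  -- compact sublevel set
  have hKcl : IsClosed (S ∩ F ⁻¹' Set.Iic (F (x 0))) :=
    hScl.inter (isClosed_Iic.preimage hFc)
  have hKcompact : IsCompact (S ∩ F ⁻¹' Set.Iic (F (x 0))) := by
    have hev : {z : EuclideanSpace ℝ (Fin n) | F (x 0) + 1 ≤ F z} ∈ cocompact (EuclideanSpace ℝ (Fin n)) :=
      hcoc.eventually (eventually_ge_atTop (F (x 0) + 1))
    obtain ⟨t, ht, hsub⟩ := mem_cocompact.mp hev
    apply ht.of_isClosed_subset hKcl
    intro z hz
    by_contra hzt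
    have : F (x 0) + 1 ≤ F z := hsub hzt
    have : F z ≤ F (x 0) := hz.2
    linarith
  have hxK : ∀ k, x k ∈ S ∩ F ⁻¹' Set.Iic (F (x 0)) :=
    fun k => ⟨hxS k, hanti (Nat.zero_le k)⟩
  obtain ⟨x', hx'K, φ, hφ, hφlim⟩ := hKcompact.tendsto_subseq hxK
  have hφlim' : Tendsto (fun j => x (φ j)) atTop (𝓝 x') := hφlim
  obtain ⟨hx'S, hx'min⟩ := hcluster φ x' hφ.tendsto_atTop hφlim'
  have hx'eq : x' = xs := huniq x' hx'S hx'min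
  refine ⟨x', hx'S, hx'min, fun z hz hzmin => (huniq z hz hzmin).trans hx'eq.symm, ?_⟩
  -- full convergence
  apply tendsto_of_subseq_tendsto
  intro ns hns
  obtain ⟨y, hyK, ψ, hψ, hψlim⟩ := hKcompact.tendsto_subseq (fun j => hxK (ns j))
  have hψlim' : Tendsto (fun j => x (ns (ψ j))) atTop (𝓝 y) := hψlim
  obtain ⟨hyS, hymin⟩ := hcluster (fun j => ns (ψ j)) y (hns.comp hψ.tendsto_atTop) hψlim'
  have hyx' : y = x' := (huniq y hyS hymin).trans hx'eq.symm
  exact ⟨ψ, by rw [← hyx']; exact hψlim'⟩
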